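/- There exist no integers x, y, z₁, z₂, z₃ such that −2x² − 2y² − 2(z₁²+z₂²+z₃²) + 6xy + (4x+2y)(z₁+z₂+z₃) = 2 and 7x + 4y + z₁ + z₂ + z₃ = 6. -/
import Mathlib

theorem aux_no8 : ∀ a b c d : ℤ,
    77*a^2 + 44*b^2 + 29*c^2 + 29*d^2 - 28*a*b - 42*a*c - 42*a*d
      - 20*b*c - 20*b*d + 2*c*d ≠ 8 := by
  intro a b c d h8
  have ha : a = 0 := by
    nlinarith [sq_nonneg (22*b - 5*c - 5*d - 7*a), sq_nonneg (21*c - d - 19*a),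
      sq_nonneg (20*d - 19*a), sq_nonneg a]
  have hb : b = 0 := by
    nlinarith [sq_nonneg (11*a - 3*c - 3*d - 2*b), sq_nonneg (64*c - 13*d - 38*b),
      sq_nonneg (51*d - 38*b), sq_nonneg b]
  subst ha hb
  have hc : c = 0 := by nlinarith [sq_nonneg (c + d), sq_nonneg c, sq_nonneg d]
  have hd : d = 0 := by nlinarith [sq_nonneg (c + d), sq_nonneg c, sq_nonneg d]
  subst hc hd
  norm_num at h8

/-- Proposition 4.5: no class `D` in the lattice `𝕃` with `D² = 2` and `D·C = 6`. -/
theorem stmt_8 :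
    ¬ ∃ x y z₁ z₂ z₃ : ℤ,
      -2 * x ^ 2 - 2 * y ^ 2 - 2 * (z₁ ^ 2 + z₂ ^ 2 + z₃ ^ 2) + 6 * x * y
        + (4 * x + 2 * y) * (z₁ + z₂ + z₃) = 2 ∧
      7 * x + 4 * y + z₁ + z₂ + z₃ = 6 := by
  rintro ⟨x, y, z₁, z₂, z₃, h1, h2⟩
  exact aux_no8 (x - z₃) (y - z₃) (z₁ - z₃) (z₂ - z₃) (by
    linear_combination (7*x + 4*y + z₁ + z₂ + z₃ + 6) * h2 - 14 * h1)
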